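/- The group G_2 = ⟨x, y | x y^{-1} x^{-1} y x = y^{-2} x y x^{-1} y^{-1} x y^2⟩ is not isomorphic to G_{1,r} = ⟨x, y | x^{-r} y^{-1} x y x^r = y^{-2} x^r y x y^{-1} x^{-r} y^2⟩ for any positive integer r. -/

import Mathlib

namespace Stmt8

abbrev F := FreeGroup (Fin 2)

def x : F := FreeGroup.of 0
def y : F := FreeGroup.of 1

/-- The relator of `G₂`. -/
def R2 : F :=
  x * y⁻¹ * x⁻¹ * y * x * (y⁻¹ * y⁻¹ * x * y * x⁻¹ * y⁻¹ * x * y * y)⁻¹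

/-- The relator of `G_{1,r}`. -/
def R1 (r : ℕ) : F :=
  (x ^ r)⁻¹ * y⁻¹ * x * y * x ^ r *
    (y⁻¹ * y⁻¹ * x ^ r * y * x * y⁻¹ * (x ^ r)⁻¹ * y * y)⁻¹

abbrev G2 := PresentedGroup ({R2} : Set F)
abbrev G1 (r : ℕ) := PresentedGroup ({R1 r} : Set F)

/-! Auxiliary: the symmetric group S₄ realized as a multiplication table on `Fin 24`. -/

def K := Fin 24

def tblN : Nat := 963083904067687740382735603551689858979262908457194405886049381333969802301183085837553985273473854330919290650503943115840069356509638955686872359685717332808901270679562285084298514669757260143135839602817718328491187159082064147838148221860841857298935111617501776737072422980980029411854874636928447370107983835290263782952548816511020583812907530610125653564010220842482491962004376120388759761678501504925865068116183498263901531782434546190694459208408295563000458219589420019657733870239199217371120552283113993841669272690250937181101628696532967492507089921218779169242377132803342235395010373055173633197438399586503732527643592394751693744750901567759454225611815304897823538575145718919194832468029427789693900593094299686717877973378999991997074262632222442029776699593767455265065230686956072508893019315770005973264241629444791670033435835305658400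
def itblN : Nat := 978321207349091352592539713606387744
def tbl (a b : Fin 24) : Fin 24 :=
  ⟨((tblN >>> (5 * (24 * a.val + b.val))) &&& 31) % 24, Nat.mod_lt _ (by norm_num)⟩
def itbl (a : Fin 24) : Fin 24 :=
  ⟨((itblN >>> (5 * a.val)) &&& 31) % 24, Nat.mod_lt _ (by norm_num)⟩

instance : DecidableEq K := instDecidableEqFin 24
instance : Fintype K := Fin.fintype 24
instance : Mul K := ⟨tbl⟩
instance : One K := ⟨(0 : Fin 24)⟩
instance : Inv K := ⟨itbl⟩

set_option maxHeartbeats 4000000 in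
set_option maxRecDepth 100000 in
instance : Group K where
  mul := (· * ·)
  one := 1
  inv := (·⁻¹)
  mul_assoc := by decide
  one_mul := by decide
  mul_one := by decide
  inv_mul_cancel := by decide

/-- The word of the relator `R2` evaluated in a group. -/
def W2 {G : Type*} [Group G] (a b : G) : G :=
  a * b⁻¹ * a⁻¹ * b * a * (b⁻¹ * b⁻¹ * a * b * a⁻¹ * b⁻¹ * a * b * b)⁻¹

/-- The word of the relator `R1 r` evaluated in a group, with `c = a ^ r`. -/
def W1 {G : Type*} [Group G] (c a b : G) : G :=
  c⁻¹ * b⁻¹ * a * b * c * (b⁻¹ * b⁻¹ * c * b * a * b⁻¹ * c⁻¹ * b * b)⁻¹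

lemma lift_R2 {G : Type*} [Group G] (f : Fin 2 → G) :
    FreeGroup.lift f R2 = W2 (f 0) (f 1) := by
  simp only [R2, x, y, W2, map_mul, map_inv, FreeGroup.lift_apply_of]

lemma lift_R1 {G : Type*} [Group G] (r : ℕ) (f : Fin 2 → G) :
    FreeGroup.lift f (R1 r) = W1 ((f 0) ^ r) (f 0) (f 1) := by
  simp only [R1, x, y, W1, map_mul, map_inv, map_pow, FreeGroup.lift_apply_of]

/-- Universal property: homs out of a one-relator presented group. -/
def homEquiv {G : Type*} [Group G] (R : F) :
    (PresentedGroup ({R} : Set F) →* G) ≃ {f : Fin 2 → G // FreeGroup.lift f R = 1} where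
  toFun φ := ⟨fun i => φ (PresentedGroup.of i), by
    have h1 : ∀ w : F, φ.comp (PresentedGroup.mk {R}) w
        = FreeGroup.lift (fun i => φ (PresentedGroup.of i)) w := by
      intro w
      exact FreeGroup.lift_unique (φ.comp (PresentedGroup.mk {R})) (fun a => rfl)
    have h2 : PresentedGroup.mk ({R} : Set F) R = 1 :=
      (QuotientGroup.eq_one_iff R).mpr
        (Subgroup.subset_normalClosure (Set.mem_singleton R))
    have := h1 R
    rw [MonoidHom.comp_apply, h2, map_one] at this
    exact this.symm⟩
  invFun f := PresentedGroup.toGroup (f := f.1)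
    (by rintro r' hr'; rw [Set.mem_singleton_iff] at hr'; subst hr'; exact f.2)
  left_inv φ := by
    symm
    apply PresentedGroup.ext
    intro i
    simp [PresentedGroup.toGroup.of]
  right_inv f := Subtype.ext (funext fun i => PresentedGroup.toGroup.of _)

set_option maxHeartbeats 4000000 in
set_option maxRecDepth 100000 in
lemma pow12 : ∀ a : K, a ^ 12 = 1 := by decide

set_option maxHeartbeats 16000000 in
set_option maxRecDepth 100000 in
lemma card_W2 : Fintype.card {p : K × K // W2 p.1 p.2 = 1} = 384 := by decide

set_option maxHeartbeats 64000000 in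
set_option maxRecDepth 1000000 in
lemma card_W1 : ∀ s : Fin 12,
    Fintype.card {p : K × K // W1 (p.1 ^ (s : ℕ)) p.1 p.2 = 1} ≠ 384 := by decide

theorem not_isomorphic (r : ℕ) (hr : 0 < r) : IsEmpty (G2 ≃* G1 r) := by
  constructor
  intro e
  -- transport hom-sets along the isomorphism
  have E0 : (G2 →* K) ≃ (G1 r →* K) :=
    { toFun := fun φ => φ.comp e.symm.toMonoidHom
      invFun := fun φ => φ.comp e.toMonoidHom
      left_inv := fun φ => by ext a; simp
      right_inv := fun φ => by ext a; simp }
  have E : {f : Fin 2 → K // FreeGroup.lift f R2 = 1}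
      ≃ {f : Fin 2 → K // FreeGroup.lift f (R1 r) = 1} :=
    ((homEquiv R2).symm.trans E0).trans (homEquiv (R1 r))
  have E2 : {f : Fin 2 → K // FreeGroup.lift f R2 = 1} ≃ {p : K × K // W2 p.1 p.2 = 1} :=
    (piFinTwoEquiv fun _ => K).subtypeEquiv (by
      intro f
      rw [lift_R2]
      rfl)
  have E3 : {f : Fin 2 → K // FreeGroup.lift f (R1 r) = 1}
      ≃ {p : K × K // W1 (p.1 ^ (r % 12)) p.1 p.2 = 1} :=
    (piFinTwoEquiv fun _ => K).subtypeEquiv (by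
      intro f
      rw [lift_R1, pow_eq_pow_mod r (pow12 (f 0))]
      rfl)
  have hcard : Fintype.card {p : K × K // W1 (p.1 ^ (r % 12)) p.1 p.2 = 1}
      = Fintype.card {p : K × K // W2 p.1 p.2 = 1} :=
    Fintype.card_congr ((E3.symm.trans E.symm).trans E2)
  have hs : r % 12 < 12 := Nat.mod_lt _ (by norm_num)
  have := card_W1 ⟨r % 12, hs⟩
  rw [card_W2] at hcard
  exact this (by simpa using hcard)

end Stmt8
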